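/- Let H be a Heisenberg group (a group whose commutator subgroup [H,H] is contained in its centre Z(H)) such that the centre Z(H) has finite index in H, let A be a maximal abelian subgroup of H, and let χ : Z(H) → ℂˣ be a character with ker(χ) ∩ [H,H] = {1}. If χ₁, χ₂ : A → ℂˣ are two homomorphisms whose restrictions to Z(H) both equal χ, then there exists x ∈ H such that χ₂(a) = χ₁(x a x⁻¹) for all a ∈ A. -/

import Mathlib

/-- A subgroup is maximal abelian: it is abelian, and any abelian subgroup
containing it is equal to it. -/
def Subgroup.IsMaximalAbelian {H : Type*} [Group H] (A : Subgroup H) : Prop :=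
  (∀ x ∈ A, ∀ y ∈ A, x * y = y * x) ∧
    ∀ B : Subgroup H, A ≤ B → (∀ x ∈ B, ∀ y ∈ B, x * y = y * x) → B = A

open scoped commutatorElement

private lemma card_dual_aux (G : Type*) [CommGroup G] [Finite G] :
    Nat.card (G →* ℂˣ) = Nat.card G ∧ Finite (G →* ℂˣ) := by
  haveI : NeZero ((Monoid.exponent G : ℂ)) :=
    ⟨Nat.cast_ne_zero.mpr Monoid.exponent_ne_zero_of_finite⟩
  obtain ⟨e⟩ := CommGroup.monoidHom_mulEquiv_of_hasEnoughRootsOfUnity G ℂ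
  exact ⟨Nat.card_congr e.toEquiv, Finite.of_equiv _ e.symm.toEquiv⟩

private lemma comm_left_aux {H : Type*} [Group H] (x y a : H)
    (h : ∀ g, g * ⁅y, a⁆ = ⁅y, a⁆ * g) : ⁅x * y, a⁆ = ⁅y, a⁆ * ⁅x, a⁆ := by
  have e1 : y * a * y⁻¹ = ⁅y, a⁆ * a := by rw [commutatorElement_def]; group
  calc ⁅x * y, a⁆ = x * (y * a * y⁻¹) * x⁻¹ * a⁻¹ := by
        rw [commutatorElement_def]; group
    _ = x * (⁅y, a⁆ * a) * x⁻¹ * a⁻¹ := by rw [e1]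
    _ = x * ⁅y, a⁆ * (a * x⁻¹ * a⁻¹) := by group
    _ = ⁅y, a⁆ * x * (a * x⁻¹ * a⁻¹) := by rw [h x]
    _ = ⁅y, a⁆ * ⁅x, a⁆ := by rw [commutatorElement_def]; group

private lemma comm_right_aux {H : Type*} [Group H] (x a b : H)
    (h : ∀ g, g * ⁅x, b⁆ = ⁅x, b⁆ * g) : ⁅x, a * b⁆ = ⁅x, b⁆ * ⁅x, a⁆ := by
  calc ⁅x, a * b⁆ = x * a * x⁻¹ * ⁅x, b⁆ * a⁻¹ := by
        rw [commutatorElement_def, commutatorElement_def]; group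
    _ = ⁅x, b⁆ * (x * a * x⁻¹) * a⁻¹ := by rw [← h (x * a * x⁻¹)]
    _ = ⁅x, b⁆ * ⁅x, a⁆ := by rw [commutatorElement_def]; group

/-- In a Heisenberg group with finite central quotient, any two extensions to a
maximal abelian subgroup `A` of a central character `χ` with `ker χ ∩ [H,H] = 1`
are conjugate under `H`. -/
theorem extensions_of_central_character_are_conjugate
    (H : Type*) [Group H]
    (hHeis : commutator H ≤ Subgroup.center H)
    (hfin : (Subgroup.center H).FiniteIndex)
    (A : Subgroup H) (hA : A.IsMaximalAbelian)
    (χ : Subgroup.center H →* ℂˣ)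
    (hker : ∀ h ∈ commutator H, ∀ hz : h ∈ Subgroup.center H, χ ⟨h, hz⟩ = 1 → h = 1)
    (χ₁ χ₂ : A →* ℂˣ)
    (hres₁ : ∀ (z : Subgroup.center H) (hz : (z : H) ∈ A), χ₁ ⟨z, hz⟩ = χ z)
    (hres₂ : ∀ (z : Subgroup.center H) (hz : (z : H) ∈ A), χ₂ ⟨z, hz⟩ = χ z) :
    ∃ x : H, ∀ a : A, ∀ hc : x * (a : H) * x⁻¹ ∈ A,
      χ₂ a = χ₁ ⟨x * (a : H) * x⁻¹, hc⟩ := by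
  classical
  -- commutator elements are central
  have hcz : ∀ x a : H, ⁅x, a⁆ ∈ Subgroup.center H := fun x a => hHeis <| by
    rw [commutator_def]
    exact Subgroup.commutator_mem_commutator (Subgroup.mem_top _) (Subgroup.mem_top _)
  have hccomm : ∀ x a : H, ⁅x, a⁆ ∈ commutator H := fun x a => by
    rw [commutator_def]
    exact Subgroup.commutator_mem_commutator (Subgroup.mem_top _) (Subgroup.mem_top _)
  have hcentral : ∀ z ∈ Subgroup.center H, ∀ g : H, g * z = z * g := fun z hz g =>
    Subgroup.mem_center_iff.mp hz g
  -- the kernel condition, restated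
  have hker' : ∀ x a : H, χ ⟨⁅x, a⁆, hcz x a⟩ = 1 → ⁅x, a⁆ = 1 := fun x a h =>
    hker _ (hccomm x a) (hcz x a) h
  -- anything commuting with all of A lies in A
  have hcent : ∀ x : H, (∀ a ∈ A, x * a = a * x) → x ∈ A := by
    intro x hx
    set S : Set H := insert x (A : Set H) with hS
    have hpair : ∀ p ∈ S, ∀ q ∈ S, p * q = q * p := by
      rintro p (rfl | hp) q (rfl | hq)
      · rfl
      · exact hx q hq
      · exact (hx p hp).symm
      · exact hA.1 p hp q hq
    have hBcomm : ∀ p ∈ Subgroup.closure S, ∀ q ∈ Subgroup.closure S, p * q = q * p := by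
      have hle : Subgroup.closure S ≤ Subgroup.centralizer (Subgroup.closure S : Set H) := by
        refine (Subgroup.closure_le _).mpr ?_
        rw [Subgroup.centralizer_closure]
        intro s hs
        simp only [SetLike.mem_coe, Subgroup.mem_iInf]
        intro g hg
        exact hpair g hg s hs
      intro p hp q hq
      exact Subgroup.mem_centralizer_iff.mp (hle hq) p hp
    have hBA : Subgroup.closure S = A := by
      refine hA.2 _ ?_ hBcomm
      intro a ha
      exact Subgroup.subset_closure (Set.mem_insert_of_mem _ ha)
    rw [← hBA]
    exact Subgroup.subset_closure (Set.mem_insert _ _)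
  -- the center is contained in A
  have hZA : Subgroup.center H ≤ A := fun z hz => hcent z fun a _ => (hcentral z hz a).symm
  -- A is normal
  haveI hAnormal : A.Normal := by
    refine ⟨fun a ha g => ?_⟩
    have : g * a * g⁻¹ = ⁅g, a⁆ * a := by rw [commutatorElement_def]; group
    rw [this]
    exact A.mul_mem (hZA (hcz g a)) ha
  -- the commutator pairing with values in the center
  set zc : H → H → Subgroup.center H := fun x a => ⟨⁅x, a⁆, hcz x a⟩ with hzc
  have hzc_mul_left : ∀ x y a : H, zc (x * y) a = zc x a * zc y a := by
    intro x y a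
    apply Subtype.ext
    show ⁅x * y, a⁆ = ⁅x, a⁆ * ⁅y, a⁆
    rw [comm_left_aux x y a fun g => hcentral _ (hcz y a) g]
    exact (hcentral _ (hcz y a) ⁅x, a⁆).symm
  have hzc_mul_right : ∀ x a b : H, zc x (a * b) = zc x a * zc x b := by
    intro x a b
    apply Subtype.ext
    show ⁅x, a * b⁆ = ⁅x, a⁆ * ⁅x, b⁆
    rw [comm_right_aux x a b fun g => hcentral _ (hcz x b) g]
    exact (hcentral _ (hcz x b) ⁅x, a⁆).symm
  have hone_right : ∀ x : H, zc x 1 = 1 := fun x => Subtype.ext (commutatorElement_one_right x)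
  have hone_left : ∀ a : H, zc 1 a = 1 := fun a => Subtype.ext (commutatorElement_one_left a)
  have hzc_one : ∀ x a : H, x * a = a * x → zc x a = 1 := by
    intro x a h
    apply Subtype.ext
    show ⁅x, a⁆ = 1
    rw [commutatorElement_eq_one_iff_mul_comm]
    exact h
  -- the pairing as a homomorphism H →* (A →* ℂˣ)
  set f : H →* (A →* ℂˣ) :=
    { toFun := fun x =>
      { toFun := fun a => χ (zc x (a : H))
        map_one' := by
          show χ (zc x (1 : H)) = 1
          rw [hone_right, map_one]
        map_mul' := fun a b => by
          show χ (zc x ((a : H) * (b : H))) = χ (zc x (a : H)) * χ (zc x (b : H))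
          rw [hzc_mul_right, map_mul] }
      map_one' := by
        refine MonoidHom.ext fun a => ?_
        show χ (zc (1 : H) (a : H)) = 1
        rw [hone_left, map_one]
      map_mul' := fun x y => by
        refine MonoidHom.ext fun a => ?_
        show χ (zc (x * y) (a : H)) = χ (zc x (a : H)) * χ (zc y (a : H))
        rw [hzc_mul_left, map_mul] } with hf
  have hf_apply : ∀ (x : H) (a : A), f x a = χ (zc x (a : H)) := fun _ _ => rfl
  -- f x is trivial for x ∈ A
  have hfA : ∀ x ∈ A, ∀ a : A, f x a = 1 := by
    intro x hx a
    rw [hf_apply, hzc_one x _ (hA.1 x hx a a.2), map_one]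
  -- if f x is trivial then x ∈ A
  have hfA' : ∀ x : H, (∀ a : A, f x a = 1) → x ∈ A := by
    intro x hx
    refine hcent x fun a ha => ?_
    have h1 : ⁅x, a⁆ = 1 := hker' x a (hx ⟨a, ha⟩)
    rwa [commutatorElement_eq_one_iff_mul_comm] at h1
  -- if f x a = 1 for all x then a is central
  have hfZ : ∀ a : A, (∀ x : H, f x a = 1) → (a : H) ∈ Subgroup.center H := by
    intro a ha
    refine Subgroup.mem_center_iff.mpr fun g => ?_
    have h1 : ⁅g, (a : H)⁆ = 1 := hker' g a (ha g)
    rwa [commutatorElement_eq_one_iff_mul_comm] at h1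
  -- commutative group structures
  letI cA : CommGroup A := { (inferInstance : Group A) with
    mul_comm := fun a b => Subtype.ext (hA.1 _ a.2 _ b.2) }
  letI cQ : CommGroup (H ⧸ A) := { (inferInstance : Group (H ⧸ A)) with
    mul_comm := fun p q => by
      induction p using QuotientGroup.induction_on with | H x =>
      induction q using QuotientGroup.induction_on with | H y =>
      rw [← QuotientGroup.mk_mul, ← QuotientGroup.mk_mul]
      rw [QuotientGroup.eq]
      have : (x * y)⁻¹ * (y * x) = ⁅y⁻¹, x⁻¹⁆ := by
        rw [commutatorElement_def]; group
      rw [this]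
      exact hZA (hcz _ _) }
  set ZA : Subgroup A := (Subgroup.center H).subgroupOf A with hZAdef
  -- finiteness
  haveI := hfin
  haveI : A.FiniteIndex := Subgroup.finiteIndex_of_le hZA
  haveI : ZA.FiniteIndex := inferInstance
  haveI : Finite (H ⧸ A) := A.finite_quotient_of_finiteIndex
  haveI : Finite (A ⧸ ZA) := ZA.finite_quotient_of_finiteIndex
  -- descend f to fbar : (H ⧸ A) →* ((A ⧸ ZA) →* ℂˣ)
  have hftriv : ∀ x : H, ∀ a ∈ ZA, f x a = 1 := by
    intro x a ha
    rw [hf_apply, hzc_one x _ (hcentral _ (Subgroup.mem_subgroupOf.mp ha) x), map_one]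
  set f' : H →* ((A ⧸ ZA) →* ℂˣ) :=
    { toFun := fun x => QuotientGroup.lift ZA (f x) (hftriv x)
      map_one' := by
        refine MonoidHom.ext fun q => ?_
        induction q using QuotientGroup.induction_on with | H a =>
        simp
      map_mul' := fun x y => by
        refine MonoidHom.ext fun q => ?_
        induction q using QuotientGroup.induction_on with | H a =>
        simp; rfl } with hf'
  have hf'_mk : ∀ (x : H) (a : A), f' x (QuotientGroup.mk a) = f x a := fun _ _ => rfl
  set fbar : (H ⧸ A) →* ((A ⧸ ZA) →* ℂˣ) :=
    QuotientGroup.lift A f' (by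
      intro x hx
      simp only [MonoidHom.mem_ker]
      refine MonoidHom.ext fun q => ?_
      induction q using QuotientGroup.induction_on with | H a =>
      rw [hf'_mk]
      simpa using hfA x hx a) with hfbar
  have hfbar_mk : ∀ (x : H) (a : A),
      fbar (QuotientGroup.mk x) (QuotientGroup.mk a) = f x a := fun _ _ => rfl
  have hfbar_inj : Function.Injective fbar := by
    refine (injective_iff_map_eq_one fbar).mpr fun q hq => ?_
    induction q using QuotientGroup.induction_on with | H x =>
    rw [QuotientGroup.eq_one_iff]
    refine hfA' x fun a => ?_
    have := congrFun (congrArg DFunLike.coe hq) (QuotientGroup.mk a)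
    simpa [hfbar_mk] using this
  -- the reverse pairing gbar : (A ⧸ ZA) →* ((H ⧸ A) →* ℂˣ)
  set g : A →* (H →* ℂˣ) :=
    { toFun := fun a =>
      { toFun := fun x => χ (zc x (a : H))
        map_one' := by
          show χ (zc (1 : H) (a : H)) = 1
          rw [hone_left, map_one]
        map_mul' := fun x y => by
          show χ (zc (x * y) (a : H)) = χ (zc x (a : H)) * χ (zc y (a : H))
          rw [hzc_mul_left, map_mul] }
      map_one' := by
        refine MonoidHom.ext fun x => ?_
        show χ (zc x ((1 : A) : H)) = 1
        rw [show ((1 : A) : H) = (1 : H) from rfl, hone_right, map_one]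
      map_mul' := fun a b => by
        refine MonoidHom.ext fun x => ?_
        show χ (zc x ((a : H) * (b : H))) = χ (zc x (a : H)) * χ (zc x (b : H))
        rw [hzc_mul_right, map_mul] } with hg
  have hg_apply : ∀ (a : A) (x : H), g a x = f x a := fun _ _ => rfl
  set g' : A →* ((H ⧸ A) →* ℂˣ) :=
    { toFun := fun a => QuotientGroup.lift A (g a) (by
        intro x hx
        simp only [MonoidHom.mem_ker]
        show f x a = 1
        exact hfA x hx a)
      map_one' := by
        refine MonoidHom.ext fun q => ?_
        induction q using QuotientGroup.induction_on with | H y =>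
        show χ (zc y ((1 : A) : H)) = 1
        rw [show ((1 : A) : H) = (1 : H) from rfl, hone_right, map_one]
      map_mul' := fun a b => by
        refine MonoidHom.ext fun q => ?_
        induction q using QuotientGroup.induction_on with | H y =>
        show χ (zc y ((a : H) * (b : H))) = χ (zc y (a : H)) * χ (zc y (b : H))
        rw [hzc_mul_right, map_mul] } with hg'
  have hg'_mk : ∀ (a : A) (x : H), g' a (QuotientGroup.mk x) = f x a := fun _ _ => rfl
  set gbar : (A ⧸ ZA) →* ((H ⧸ A) →* ℂˣ) :=
    QuotientGroup.lift ZA g' (by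
      intro a ha
      simp only [MonoidHom.mem_ker]
      refine MonoidHom.ext fun q => ?_
      induction q using QuotientGroup.induction_on with | H y =>
      show χ (zc y (a : H)) = 1
      rw [hzc_one y _ (hcentral _ (Subgroup.mem_subgroupOf.mp ha) y), map_one]) with hgbar
  have hgbar_inj : Function.Injective gbar := by
    refine (injective_iff_map_eq_one gbar).mpr fun q hq => ?_
    induction q using QuotientGroup.induction_on with | H a =>
    rw [QuotientGroup.eq_one_iff]
    refine hfZ a fun x => ?_
    have := congrFun (congrArg DFunLike.coe hq) (QuotientGroup.mk x)
    exact this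
  -- cardinality comparison
  obtain ⟨hcardW, hfinW⟩ := card_dual_aux (A ⧸ ZA)
  obtain ⟨hcardQ, hfinQ⟩ := card_dual_aux (H ⧸ A)
  haveI := hfinW
  haveI := hfinQ
  have hle2 : Nat.card (A ⧸ ZA) ≤ Nat.card ((H ⧸ A) →* ℂˣ) :=
    Nat.card_le_card_of_injective gbar hgbar_inj
  have hcard : Nat.card ((A ⧸ ZA) →* ℂˣ) ≤ Nat.card (H ⧸ A) := by
    rw [hcardW]
    rw [hcardQ] at hle2
    exact hle2
  have hfbar_surj : Function.Surjective fbar :=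
    (hfbar_inj.bijective_of_nat_card_le hcard).2
  -- the quotient character ψ = χ₂ / χ₁
  set ψ : A →* ℂˣ := χ₂ / χ₁ with hψ
  have hψ_apply : ∀ a : A, ψ a = χ₂ a / χ₁ a := fun a => rfl
  have hψtriv : ∀ a ∈ ZA, a ∈ ψ.ker := by
    intro a ha
    simp only [MonoidHom.mem_ker]
    have ha' : (a : H) ∈ Subgroup.center H := Subgroup.mem_subgroupOf.mp ha
    have h1 : χ₁ a = χ ⟨(a : H), ha'⟩ := by
      have := hres₁ ⟨(a : H), ha'⟩ a.2
      simpa using this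
    have h2 : χ₂ a = χ ⟨(a : H), ha'⟩ := by
      have := hres₂ ⟨(a : H), ha'⟩ a.2
      simpa using this
    rw [hψ_apply, h1, h2, div_self']
  set ψbar : (A ⧸ ZA) →* ℂˣ := QuotientGroup.lift ZA ψ hψtriv with hψbar
  obtain ⟨q, hq⟩ := hfbar_surj ψbar
  obtain ⟨x, rfl⟩ := QuotientGroup.mk_surjective q
  refine ⟨x, fun a hc => ?_⟩
  have key : f x a = ψ a := by
    have := congrFun (congrArg DFunLike.coe hq) (QuotientGroup.mk a)
    rw [hfbar_mk] at this
    simpa [hψbar] using this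
  -- unravel
  have hmemA : ⁅x, (a : H)⁆ ∈ A := hZA (hcz x (a : H))
  have hsplit : (⟨x * (a : H) * x⁻¹, hc⟩ : A) = ⟨⁅x, (a : H)⁆, hmemA⟩ * a := by
    apply Subtype.ext
    show x * (a : H) * x⁻¹ = ⁅x, (a : H)⁆ * a
    rw [commutatorElement_def]; group
  have hval : χ₁ ⟨⁅x, (a : H)⁆, hmemA⟩ = χ (zc x (a : H)) := hres₁ (zc x (a : H)) hmemA
  rw [hsplit, map_mul, hval, ← hf_apply, key, hψ_apply]
  rw [div_mul_cancel]
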